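/- Let G be a finitely generated group and suppose N₁ ⊆ N₂ ⊆ ... is an ascending chain of normal subgroups of G such that each quotient G/Nᵢ is virtually polycyclic. If G/(⋃ᵢ Nᵢ) is finitely presented, then the chain is eventually stationary, i.e., there exists k such that Nᵢ = Nₖ for all i ≥ k. -/
import Mathlib


/-- A group is polycyclic iff it is solvable and every subgroup is finitely generated. -/
def IsPolycyclic (G : Type*) [Group G] : Prop :=
  IsSolvable G ∧ ∀ H : Subgroup G, H.FG

/-- A group is virtually polycyclic if it has a finite-index polycyclic subgroup. -/
def IsVirtuallyPolycyclic (G : Type*) [Group G] : Prop :=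
  ∃ H : Subgroup G, H.FiniteIndex ∧ IsPolycyclic H

/-- A group is virtually nilpotent if it has a finite-index nilpotent subgroup. -/
def IsVirtuallyNilpotent (G : Type*) [Group G] : Prop :=
  ∃ H : Subgroup G, H.FiniteIndex ∧ Group.IsNilpotent H

/-- A group is finitely presented if it is a presented group on finitely many
generators with finitely many relations. -/
def FinitelyPresented (G : Type*) [Group G] : Prop :=
  ∃ (α : Type) (rels : Set (FreeGroup α)),
    Finite α ∧ rels.Finite ∧ Nonempty (PresentedGroup rels ≃* G)

/-- B. H. Neumann's lemma: if `G` is finitely generated and `G ⧸ M` is finitely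
presented, then `M` is the normal closure of a finite set. -/
lemma neumann_fin_normal_gen {G : Type*} [Group G] [Group.FG G] (M : Subgroup G) [M.Normal]
    (hfp : FinitelyPresented (G ⧸ M)) :
    ∃ T : Set G, T.Finite ∧ Subgroup.normalClosure T = M := by
  obtain ⟨S, hScl, hSfin⟩ := Group.fg_iff.mp ‹Group.FG G›
  haveI := hSfin.to_subtype
  obtain ⟨α, rels, hαfin, hrelsfin, ⟨e⟩⟩ := hfp
  -- surjection from a finitely generated free group onto G
  set φ : FreeGroup S →* G := FreeGroup.lift (fun s : S => (s : G)) with hφdef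
  have hφ : Function.Surjective φ := by
    rw [← MonoidHom.range_eq_top, hφdef, FreeGroup.range_lift_eq_closure,
      Subtype.range_coe, hScl]
  set π : G →* G ⧸ M := QuotientGroup.mk' M with hπdef
  have hπ : Function.Surjective π := QuotientGroup.mk'_surjective M
  set ψ : FreeGroup S →* G ⧸ M := π.comp φ with hψdef
  have hψ : Function.Surjective ψ := hπ.comp hφ
  -- the finite presentation map
  set p : FreeGroup α →* G ⧸ M := e.toMonoidHom.comp (PresentedGroup.mk rels) with hpdef
  have hp : Function.Surjective p := e.surjective.comp (PresentedGroup.mk_surjective rels)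
  have hmk_one : ∀ x ∈ Subgroup.normalClosure rels, PresentedGroup.mk rels x = 1 := by
    intro x hx
    have : x ∈ MonoidHom.ker (PresentedGroup.mk rels) := by
      show x ∈ MonoidHom.ker (QuotientGroup.mk' (Subgroup.normalClosure rels))
      rw [QuotientGroup.ker_mk']
      exact hx
    exact this
  -- lift the generators of the presentation through ψ
  choose w hw using fun a : α => hψ (p (FreeGroup.of a))
  set θ : FreeGroup α →* FreeGroup S := FreeGroup.lift w with hθdef
  have hθcomm : ∀ x, ψ (θ x) = p x := by
    intro x
    have : ψ.comp θ = p := FreeGroup.ext_hom _ _ (fun a => by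
      simp [hθdef, hw a])
    rw [← this]; rfl
  -- express the generators of FreeGroup S in terms of the presentation
  choose v hv using fun s : S => hp (ψ (FreeGroup.of s))
  set T : Set (FreeGroup S) :=
    θ '' rels ∪ Set.range (fun s : S => (FreeGroup.of s)⁻¹ * θ (v s)) with hTdef
  have hTfin : T.Finite := (hrelsfin.image θ).union (Set.finite_range _)
  set K : Subgroup (FreeGroup S) := Subgroup.normalClosure T with hKdef
  haveI : K.Normal := Subgroup.normalClosure_normal
  set q : FreeGroup S →* FreeGroup S ⧸ K := QuotientGroup.mk' K with hqdef
  have hq_one : ∀ x ∈ K, q x = 1 := by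
    intro x hx
    have : x ∈ MonoidHom.ker q := by rw [hqdef, QuotientGroup.ker_mk']; exact hx
    exact this
  have hT_one : ∀ x ∈ T, q x = 1 := fun x hx => hq_one x (Subgroup.subset_normalClosure hx)
  -- K ≤ ker ψ
  have hKle : K ≤ MonoidHom.ker ψ := by
    apply Subgroup.normalClosure_le_normal
    rintro x (⟨r, hr, rfl⟩ | ⟨s, rfl⟩)
    · have : ψ (θ r) = p r := hθcomm r
      have hpr : p r = 1 := by
        rw [hpdef]
        simp only [MonoidHom.comp_apply]
        rw [hmk_one r (Subgroup.subset_normalClosure hr)]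
        exact map_one _
      simp [MonoidHom.mem_ker, this, hpr]
    · simp [MonoidHom.mem_ker, map_mul, map_inv, hθcomm, hv s]
  -- the retraction: build a hom G⧸M →* FreeGroup S ⧸ K
  have hrels_one : ∀ r ∈ rels, FreeGroup.lift (fun a : α => q (w a)) r = 1 := by
    intro r hr
    have h1 : FreeGroup.lift (fun a : α => q (w a)) = q.comp θ :=
      FreeGroup.ext_hom _ _ (fun a => by simp [hθdef])
    rw [h1]
    exact hT_one (θ r) (Or.inl ⟨r, hr, rfl⟩)
  set g : PresentedGroup rels →* FreeGroup S ⧸ K := PresentedGroup.toGroup hrels_one with hgdef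
  have hg_mk : ∀ x : FreeGroup α, g (PresentedGroup.mk rels x) = q (θ x) := by
    intro x
    have : g.comp (PresentedGroup.mk rels) = q.comp θ :=
      FreeGroup.ext_hom _ _ (fun a => by
        show g (PresentedGroup.of a) = q (θ (FreeGroup.of a))
        rw [PresentedGroup.toGroup.of]
        simp [hθdef])
    have := congrArg (fun f => f x) this
    exact this
  set h : (G ⧸ M) →* FreeGroup S ⧸ K := g.comp e.symm.toMonoidHom with hhdef
  have hretr : ∀ x : FreeGroup S, h (ψ x) = q x := by
    intro x
    have : h.comp ψ = q := by
      apply FreeGroup.ext_hom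
      intro s
      show h (ψ (FreeGroup.of s)) = q (FreeGroup.of s)
      rw [← hv s]
      have hesymm : e.symm (p (v s)) = PresentedGroup.mk rels (v s) := by
        rw [hpdef]
        simp
      show g (e.symm (p (v s))) = q (FreeGroup.of s)
      rw [hesymm, hg_mk]
      have h1 : q ((FreeGroup.of s)⁻¹ * θ (v s)) = 1 :=
        hT_one _ (Or.inr ⟨s, rfl⟩)
      rw [map_mul, map_inv] at h1
      exact (inv_mul_eq_one.mp h1).symm
    have := congrArg (fun f => f x) this
    exact this
  -- conclude ker ψ = K
  have hker : MonoidHom.ker ψ = K := by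
    refine le_antisymm ?_ hKle
    intro x hx
    have h1 : q x = 1 := by
      rw [← hretr x, MonoidHom.mem_ker.mp hx, map_one]
    have : x ∈ MonoidHom.ker q := h1
    rwa [hqdef, QuotientGroup.ker_mk'] at this
  -- push forward along φ
  refine ⟨φ '' T, hTfin.image φ, ?_⟩
  have h1 : Subgroup.map φ K = Subgroup.normalClosure (φ '' T) :=
    Subgroup.map_normalClosure T φ hφ
  have h2 : MonoidHom.ker ψ = Subgroup.comap φ M := by
    ext x
    simp [hψdef, MonoidHom.mem_ker, Subgroup.mem_comap, hπdef, QuotientGroup.eq_one_iff]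
  have h3 : Subgroup.map φ (Subgroup.comap φ M) = M :=
    Subgroup.map_comap_eq_self_of_surjective hφ M
  rw [← h1, ← hker, h2, h3]

/-- An ascending chain of normal subgroups of a finitely generated group with virtually
polycyclic quotients, whose union has finitely presented quotient, is stationary. -/
theorem stationary_chain (G : Type*) [Group G] [Group.FG G]
    (N : ℕ → Subgroup G) (hmono : Monotone N) [∀ i, (N i).Normal]
    [(⨆ i, N i).Normal]
    (hvp : ∀ i, IsVirtuallyPolycyclic (G ⧸ N i))
    (hfp : FinitelyPresented (G ⧸ ⨆ i, N i)) :
    ∃ k, ∀ i, k ≤ i → N i = N k := by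
  obtain ⟨T, hTfin, hTcl⟩ := neumann_fin_normal_gen (⨆ i, N i) hfp
  have hTsub : T ⊆ ↑(⨆ i, N i) := hTcl ▸ Subgroup.subset_normalClosure
  have hdir : Directed (· ≤ ·) N := hmono.directed_le
  have hidx : ∀ t : T, ∃ i, (t : G) ∈ N i := fun t =>
    (Subgroup.mem_iSup_of_directed hdir).mp (hTsub t.2)
  choose f hf using hidx
  haveI := hTfin.fintype
  refine ⟨Finset.univ.sup f, fun i hi => ?_⟩
  have hTk : T ⊆ ↑(N (Finset.univ.sup f)) := by
    intro t ht
    exact hmono (Finset.le_sup (Finset.mem_univ ⟨t, ht⟩)) (hf ⟨t, ht⟩)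
  have hle : (⨆ i, N i) ≤ N (Finset.univ.sup f) := by
    rw [← hTcl]
    exact Subgroup.normalClosure_le_normal hTk
  exact le_antisymm (le_trans (le_iSup N i) hle) (hmono hi)
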